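/- Let G be a finite group that is the product G = A·B of two subnormal supersolvable subgroups A and B. If the derived subgroup G' of G is nilpotent, then G is supersolvable. -/

import Mathlib

open Subgroup Pointwise

/-- `H` is a normal subgroup of `K` (both viewed as subgroups of the ambient group `G`). -/
def NormalIn {G : Type*} [Group G] (H K : Subgroup G) : Prop :=
  H ≤ K ∧ ∀ k ∈ K, ∀ h ∈ H, k * h * k⁻¹ ∈ H

/-- `H` is subnormal in `K`: there is a chain `H = c 0 ⊴ c 1 ⊴ ... ⊴ c n = K`. -/
def SubnormalIn {G : Type*} [Group G] (H K : Subgroup G) : Prop :=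
  ∃ (n : ℕ) (c : ℕ → Subgroup G), c 0 = H ∧ c n = K ∧ ∀ i < n, NormalIn (c i) (c (i + 1))

/-- The hypercenter: the limit of the upper central series. -/
def hypercenter (G : Type*) [Group G] : Subgroup G := ⨆ n, _root_.upperCentralSeries G n

/-- The nilpotent residual: the intersection of all normal subgroups with nilpotent quotient. -/
def nilpotentResidual (G : Type*) [Group G] : Subgroup G :=
  ⨅ N ∈ {N : Subgroup G |
    ∃ h : N.Normal, @Group.IsNilpotent (G ⧸ N) (@QuotientGroup.Quotient.group G _ N h)}, N

/-- The Fitting subgroup: the join of all normal nilpotent subgroups. -/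
def fitting (G : Type*) [Group G] : Subgroup G :=
  ⨆ N ∈ {N : Subgroup G | N.Normal ∧ Group.IsNilpotent N}, N

/-- `N` is a minimal normal subgroup. -/
def IsMinimalNormal {G : Type*} [Group G] (N : Subgroup G) : Prop :=
  N.Normal ∧ N ≠ ⊥ ∧ ∀ K : Subgroup G, K.Normal → K ≤ N → K = ⊥ ∨ K = N

/-- The socle: the join of all minimal normal subgroups. -/
def socle (G : Type*) [Group G] : Subgroup G :=
  ⨆ N ∈ {N : Subgroup G | IsMinimalNormal N}, N

/-- A group is supersolvable if it has a chain of normal subgroups with cyclic factors. -/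
def IsSupersolvable (G : Type*) [Group G] : Prop :=
  ∃ (n : ℕ) (c : ℕ → Subgroup G), c 0 = ⊥ ∧ c n = ⊤ ∧ (∀ i, (c i).Normal) ∧
    ∀ i < n, c i ≤ c (i + 1) ∧ ∃ g : G, c (i + 1) = c i ⊔ Subgroup.zpowers g

/-- A subgroup `H` is pronormal if `H` and each conjugate `H^g` are conjugate in their join. -/
def Pronormal {G : Type*} [Group G] (H : Subgroup G) : Prop :=
  ∀ g : G, ∃ x ∈ H ⊔ H.map (MulAut.conj g).toMonoidHom,
    H.map (MulAut.conj g).toMonoidHom = H.map (MulAut.conj x).toMonoidHom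

/-- A subgroup `H` is abnormal if `g ∈ ⟨H, H^g⟩` for all `g`. -/
def Abnormal {G : Type*} [Group G] (H : Subgroup G) : Prop :=
  ∀ g : G, g ∈ H ⊔ H.map (MulAut.conj g).toMonoidHom

/-- `Δ(G)`: the intersection of all abnormal maximal subgroups. -/
def abnormalDelta (G : Type*) [Group G] : Subgroup G :=
  ⨅ M ∈ {M : Subgroup G | IsCoatom M ∧ Abnormal M}, M

/-- The generalized Fitting subgroup `F̃(G)`: the preimage of `Soc(G/Φ(G))` in `G`. -/
def genFitting (G : Type*) [Group G] : Subgroup G :=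
  (socle (G ⧸ frattini G)).comap (QuotientGroup.mk' (frattini G))

/-- A group is `p`-decomposable if every `p`-element commutes with every `p'`-element. -/
def IsPDecomposable (p : ℕ) (K : Type*) [Group K] : Prop :=
  ∀ a b : K, (∃ n, orderOf a = p ^ n) → Nat.Coprime (orderOf b) p → Commute a b

namespace ProdSS
variable {G : Type*} [Group G]

/-- conjugate subgroup -/
def cj (h : G) (M : Subgroup G) : Subgroup G := M.map (MulAut.conj h).toMonoidHom

lemma mem_cj {h x : G} {M : Subgroup G} : x ∈ cj h M ↔ h⁻¹ * x * h ∈ M := by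
  rw [cj, Subgroup.mem_map_equiv]
  simp [MulAut.conj, mul_assoc]

lemma cj_bot (h : G) : cj h (⊥ : Subgroup G) = ⊥ := by
  ext x
  rw [mem_cj, Subgroup.mem_bot, Subgroup.mem_bot]
  constructor
  · intro h1
    have := congrArg (fun z => h * z * h⁻¹) h1
    simpa [mul_assoc] using this
  · intro h1; simp [h1]

lemma cj_cj (h : G) (M : Subgroup G) : cj h (cj h⁻¹ M) = M := by
  ext x
  rw [mem_cj, mem_cj]
  have h2 : h⁻¹⁻¹ * (h⁻¹ * x * h) * h⁻¹ = x := by group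
  rw [h2]

lemma cj_iSup {h : G} {ι : Sort*} (s : ι → Subgroup G) : cj h (⨆ i, s i) = ⨆ i, cj h (s i) :=
  Subgroup.map_iSup _ s

lemma chain_le {c : ℕ → Subgroup G} : ∀ {m : ℕ}, (∀ i < m, NormalIn (c i) (c (i+1))) → c 0 ≤ c m
  | 0, _ => le_rfl
  | (m+1), h => (chain_le (fun i hi => h i (by omega))).trans (h m (by omega)).1

lemma exists_min_subgroup [Finite G] (T : Set (Subgroup G)) (hT : T.Nonempty) :
    ∃ M ∈ T, ∀ X ∈ T, X ≤ M → X = M := by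
  obtain ⟨M, hM, hmin⟩ := (Set.toFinite T).exists_minimal hT
  exact ⟨M, hM, fun X hX hle => le_antisymm hle (hmin hX hle)⟩

/-- Wielandt-type lemma: an (abelian not needed) minimal `H`-normal subgroup `N` with
`N ⊓ A = ⊥` centralizes the subnormal (in `H`) subgroup `A`. -/
lemma lemmaW [Finite G] : ∀ (m : ℕ) (H A N : Subgroup G) (c : ℕ → Subgroup G),
    c 0 = A → c m = H → (∀ i < m, NormalIn (c i) (c (i+1))) →
    NormalIn N H → N ≠ ⊥ → (∀ K ≤ N, NormalIn K H → K = ⊥ ∨ K = N) →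
    N ⊓ A = ⊥ → ∀ x ∈ N, ∀ a ∈ A, Commute x a := by
  intro m
  induction m with
  | zero =>
    intro H A N c hc0 hcm _ hNn hNbot hmin hdisj x hx a ha
    exfalso
    apply hNbot
    rw [← hdisj]
    refine le_antisymm (le_inf le_rfl ?_) inf_le_left
    rw [← hc0, hcm]
    exact hNn.1
  | succ m IH =>
    intro H A N c hc0 hcm hstep hNn hNbot hmin hdisj x hx a ha
    set K := c m with hK
    have hKH : NormalIn K H := by rw [hK, ← hcm]; exact hstep m (by omega)
    have hchain : ∀ i < m, NormalIn (c i) (c (i+1)) := fun i hi => hstep i (by omega)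
    have hAK : A ≤ K := hc0 ▸ chain_le hchain
    have hNH : N ≤ H := hNn.1
    have hJn : NormalIn (N ⊓ K) H :=
      ⟨inf_le_left.trans hNH, fun k hk h hh => ⟨hNn.2 k hk h hh.1, hKH.2 k hk h hh.2⟩⟩
    rcases hmin (N ⊓ K) inf_le_left hJn with hJ | hJ
    · -- N ⊓ K = ⊥ ; the commutator [x,a] lies in N ⊓ K
      have haH : a ∈ H := hKH.1 (hAK ha)
      have h1 : x * a * x⁻¹ * a⁻¹ ∈ K := by
        have : x * a * x⁻¹ ∈ K := hKH.2 x (hNH hx) a (hAK ha)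
        exact mul_mem this (inv_mem (hAK ha))
      have h2 : x * a * x⁻¹ * a⁻¹ ∈ N := by
        have : a * x⁻¹ * a⁻¹ ∈ N := hNn.2 a haH x⁻¹ (inv_mem hx)
        have h' : x * (a * x⁻¹ * a⁻¹) ∈ N := mul_mem hx this
        simpa [mul_assoc] using h'
      have : x * a * x⁻¹ * a⁻¹ ∈ N ⊓ K := ⟨h2, h1⟩
      rw [hJ, Subgroup.mem_bot] at this
      open scoped commutatorElement in have hco : ⁅x, a⁆ = 1 := by simpa [commutatorElement_def] using this
      exact commutatorElement_eq_one_iff_commute.mp hco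
    · -- N ≤ K
      have hNK : N ≤ K := by rw [← hJ]; exact inf_le_right
      set 𝒮 : Set (Subgroup G) :=
        {M | M ≤ N ∧ NormalIn M K ∧ M ≠ ⊥ ∧ ∀ X ≤ M, NormalIn X K → X = ⊥ ∨ X = M} with h𝒮
      have hIH : ∀ M ∈ 𝒮, ∀ y ∈ M, ∀ b ∈ A, Commute y b := by
        intro M hM y hy b hb
        refine IH K A M c hc0 rfl hchain hM.2.1 hM.2.2.1 hM.2.2.2 ?_ y hy b hb
        have hle : M ⊓ A ≤ N ⊓ A := inf_le_inf_right _ hM.1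
        rw [hdisj] at hle; exact le_bot_iff.mp hle
      set S : Subgroup G := ⨆ M ∈ 𝒮, M with hS
      have hSN : S ≤ N := iSup₂_le fun M hM => hM.1
      obtain ⟨M₀, hM₀T, hM₀min⟩ := exists_min_subgroup
        {X : Subgroup G | X ≤ N ∧ NormalIn X K ∧ X ≠ ⊥}
        ⟨N, le_rfl, ⟨hNK, fun k hk y hy => hNn.2 k (hKH.1 hk) y hy⟩, hNbot⟩
      have hM₀𝒮 : M₀ ∈ 𝒮 := by
        refine ⟨hM₀T.1, hM₀T.2.1, hM₀T.2.2, fun X hXle hXn => ?_⟩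
        by_cases hX : X = ⊥
        · exact Or.inl hX
        · exact Or.inr (hM₀min X ⟨hXle.trans hM₀T.1, hXn, hX⟩ hXle)
      have hSbot : S ≠ ⊥ := fun h =>
        hM₀T.2.2 (le_bot_iff.mp (h ▸ le_iSup₂ (f := fun M (_ : M ∈ 𝒮) => M) M₀ hM₀𝒮))
      have hcj𝒮 : ∀ h ∈ H, ∀ M ∈ 𝒮, cj h M ∈ 𝒮 := by
        intro h hh M hM
        have hh' : h⁻¹ ∈ H := inv_mem hh
        refine ⟨?_, ⟨?_, ?_⟩, ?_, ?_⟩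
        · intro y hy; rw [mem_cj] at hy
          have h1 := hNn.2 h hh _ (hM.1 hy)
          have h2 : h * (h⁻¹ * y * h) * h⁻¹ = y := by group
          rwa [h2] at h1
        · intro y hy; rw [mem_cj] at hy
          have h1 := hKH.2 h hh _ (hM.2.1.1 hy)
          have h2 : h * (h⁻¹ * y * h) * h⁻¹ = y := by group
          rwa [h2] at h1
        · intro k hk y hy
          rw [mem_cj] at hy ⊢
          have hk' : h⁻¹ * k * h ∈ K := by
            have h1 := hKH.2 h⁻¹ hh' k hk
            have h2 : h⁻¹ * k * h⁻¹⁻¹ = h⁻¹ * k * h := by group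
            rwa [h2] at h1
          have h1 := hM.2.1.2 _ hk' _ hy
          have h2 : h⁻¹ * k * h * (h⁻¹ * y * h) * (h⁻¹ * k * h)⁻¹ = h⁻¹ * (k * y * k⁻¹) * h := by
            group
          rwa [h2] at h1
        · intro hbot
          apply hM.2.2.1
          refine le_bot_iff.mp fun y hy => ?_
          have h1 : h * y * h⁻¹ ∈ cj h M := by
            rw [mem_cj]
            have h2 : h⁻¹ * (h * y * h⁻¹) * h = y := by group
            rwa [h2]
          rw [hbot, Subgroup.mem_bot] at h1
          have : y = 1 := by
            have := congrArg (fun z => h⁻¹ * z * h) h1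
            simpa [mul_assoc] using this
          simp [this]
        · intro X hXle hXn
          have hXX : X = cj h (cj h⁻¹ X) := (cj_cj h X).symm
          have hX'M : cj h⁻¹ X ≤ M := by
            intro y hy; rw [mem_cj, inv_inv] at hy
            have := hXle hy
            rw [mem_cj] at this
            have h2 : h⁻¹ * (h * y * h⁻¹) * h = y := by group
            rwa [h2] at this
          have hX'n : NormalIn (cj h⁻¹ X) K := by
            constructor
            · exact hX'M.trans hM.2.1.1
            · intro k hk y hy
              rw [mem_cj, inv_inv] at hy ⊢
              have hk' : h * k * h⁻¹ ∈ K := hKH.2 h hh k hk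
              have h1 := hXn.2 _ hk' _ hy
              have h2 : h * k * h⁻¹ * (h * y * h⁻¹) * (h * k * h⁻¹)⁻¹ = h * (k * y * k⁻¹) * h⁻¹ := by
                group
              rwa [h2] at h1
          rcases hM.2.2.2 _ hX'M hX'n with h0 | h0
          · left; rw [hXX, h0, cj_bot]
          · right; rw [hXX, h0]
      have hSnorm : NormalIn S H := by
        refine ⟨hSN.trans hNH, fun h hh s hs => ?_⟩
        have hcjS : cj h S ≤ S := by
          rw [hS, cj_iSup]
          refine iSup_le fun M => ?_
          rw [cj_iSup]
          refine iSup_le fun hM => le_iSup₂ (f := fun M (_ : M ∈ 𝒮) => M) (cj h M) (hcj𝒮 h hh M hM)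
        apply hcjS
        rw [mem_cj]
        have h2 : h⁻¹ * (h * s * h⁻¹) * h = s := by group
        rwa [h2]
      rcases hmin S hSN hSnorm with h0 | h0
      · exact absurd h0 hSbot
      · have hxS : x ∈ S := h0.symm ▸ hx
        have hcent : S ≤ Subgroup.centralizer (A : Set G) :=
          iSup₂_le fun M hM y hy => Subgroup.mem_centralizer_iff.mpr
            fun b hb => (hIH M hM y hy b hb).symm
        exact Commute.symm (Subgroup.mem_centralizer_iff.mp (hcent hxS) a ha)

/-- In a supersolvable group, every nontrivial normal subgroup contains a
nontrivial cyclic normal subgroup. -/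
lemma exists_cyclic_normal {H : Type*} [Group H] (hs : IsSupersolvable H)
    (W : Subgroup H) (hWn : W.Normal) (hW : W ≠ ⊥) :
    ∃ v : H, v ≠ 1 ∧ v ∈ W ∧ (Subgroup.zpowers v).Normal := by
  obtain ⟨n, c, hc0, hcn, hcnorm, hcstep⟩ := hs
  classical
  have hex : ∃ i, W ⊓ c i ≠ ⊥ := ⟨n, by rw [hcn, inf_top_eq]; exact hW⟩
  set i₀ := Nat.find hex with hi₀
  have hspec : W ⊓ c i₀ ≠ ⊥ := Nat.find_spec hex
  have hi₀pos : i₀ ≠ 0 := by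
    intro h
    rw [h, hc0, inf_bot_eq] at hspec
    exact hspec rfl
  obtain ⟨j, hj⟩ : ∃ j, i₀ = j + 1 := ⟨i₀ - 1, by omega⟩
  have hjbot : W ⊓ c j = ⊥ := by
    by_contra hne
    exact absurd (Nat.find_min' hex hne) (by omega)
  have hi₀n : i₀ ≤ n := Nat.find_min' hex (by rw [hcn, inf_top_eq]; exact hW)
  obtain ⟨hle, g, hgeq⟩ := hcstep j (by omega)
  set L := W ⊓ c (j + 1) with hL
  have hLn : L.Normal := ⟨fun x hx g' => ⟨hWn.conj_mem x hx.1 g', (hcnorm (j+1)).conj_mem x hx.2 g'⟩⟩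
  have hLbot : L ≠ ⊥ := by rw [hL, ← hj]; exact hspec
  have hLj : L ⊓ c j = ⊥ := by
    have h1 : L ⊓ c j ≤ W ⊓ c j := inf_le_inf_right _ inf_le_left
    rw [hjbot] at h1
    exact le_bot_iff.mp h1
  haveI := hcnorm j
  set π := QuotientGroup.mk' (c j) with hπ
  set φ := π.comp L.subtype with hφ
  have hinj : Function.Injective φ := by
    rw [← MonoidHom.ker_eq_bot_iff]
    refine (Subgroup.eq_bot_iff_forall _).mpr fun x hx => ?_
    have h1 : (x : H) ∈ c j := by
      have := hx
      rw [MonoidHom.mem_ker] at this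
      have h2 : (x : H) ∈ π.ker := this
      rwa [hπ, QuotientGroup.ker_mk'] at h2
    have h3 : (x : H) ∈ L ⊓ c j := ⟨x.2, h1⟩
    rw [hLj, Subgroup.mem_bot] at h3
    exact Subtype.ext h3
  have hrange : ∀ x : L, ∃ k : ℤ, φ x = (π g) ^ k := by
    intro x
    have h1 : (x : H) ∈ c (j + 1) := x.2.2
    rw [hgeq] at h1
    have h2 : π (x : H) ∈ Subgroup.map π (c j ⊔ Subgroup.zpowers g) := ⟨x, h1, rfl⟩
    rw [Subgroup.map_sup, MonoidHom.map_zpowers] at h2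
    have h3 : Subgroup.map π (c j) = ⊥ := by
      rw [Subgroup.map_eq_bot_iff, hπ, QuotientGroup.ker_mk']
    rw [h3, bot_sup_eq] at h2
    obtain ⟨k, hk⟩ := Subgroup.mem_zpowers_iff.mp h2
    exact ⟨k, hk.symm⟩
  set T : AddSubgroup ℤ :=
    { carrier := {k : ℤ | (π g) ^ k ∈ φ.range}
      zero_mem' := by
        simp only [Set.mem_setOf_eq, zpow_zero]
        exact ⟨1, map_one φ⟩
      add_mem' := fun ha hb => by
        simp only [Set.mem_setOf_eq, zpow_add] at *
        exact mul_mem ha hb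
      neg_mem' := fun ha => by
        simp only [Set.mem_setOf_eq, zpow_neg] at *
        exact inv_mem ha } with hT
  obtain ⟨d, hd⟩ := Int.subgroup_cyclic T
  have hdT : d ∈ T := by rw [hd]; exact AddSubgroup.subset_closure rfl
  obtain ⟨v, hv⟩ : ∃ v : L, φ v = (π g) ^ d := hdT
  have hgen : ∀ x : L, ∃ m : ℤ, x = v ^ m := by
    intro x
    obtain ⟨k, hk⟩ := hrange x
    have hkT : k ∈ T := ⟨x, hk⟩
    rw [hd, AddSubgroup.mem_closure_singleton] at hkT
    obtain ⟨m, hm⟩ := hkT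
    refine ⟨m, hinj ?_⟩
    rw [map_zpow, hv, hk, ← hm]
    rw [← zpow_mul, smul_eq_mul, mul_comm]
  have hvne : (v : H) ≠ 1 := by
    intro h1
    apply hLbot
    refine (Subgroup.eq_bot_iff_forall _).mpr fun x hx => ?_
    obtain ⟨m, hm⟩ := hgen ⟨x, hx⟩
    have : x = (v : H) ^ m := congrArg Subtype.val hm
    rw [this, h1, one_zpow]
  have hLz : L = Subgroup.zpowers (v : H) := by
    refine le_antisymm (fun x hx => ?_) (Subgroup.zpowers_le.mpr v.2)
    obtain ⟨m, hm⟩ := hgen ⟨x, hx⟩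
    have : x = (v : H) ^ m := congrArg Subtype.val hm
    exact this ▸ Subgroup.zpow_mem _ (Subgroup.mem_zpowers _) m
  exact ⟨v, hvne, v.2.1, hLz ▸ hLn⟩
lemma core_comm [Finite G] (N : Subgroup G) (hNn : N.Normal) (hNbot : N ≠ ⊥)
    (hNmin : ∀ K : Subgroup G, K.Normal → K ≤ N → K = ⊥ ∨ K = N)
    (hder : Group.IsNilpotent ↥(⁅(⊤ : Subgroup G), (⊤ : Subgroup G)⁆)) :
    ⁅N, ⁅(⊤ : Subgroup G), (⊤ : Subgroup G)⁆⁆ = ⊥ ∧ ⁅N, N⁆ = ⊥ := by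
  haveI := hNn
  set G' : Subgroup G := ⁅(⊤ : Subgroup G), (⊤ : Subgroup G)⁆ with hG'
  have hJn : (N ⊓ G').Normal :=
    ⟨fun x hx g => ⟨hNn.conj_mem x hx.1 g, (Subgroup.commutator_normal ⊤ ⊤).conj_mem x hx.2 g⟩⟩
  have hNG'le : ⁅N, G'⁆ ≤ N := Subgroup.commutator_le_left N G'
  have hNG'le2 : ⁅N, G'⁆ ≤ G' := hG' ▸ Subgroup.commutator_mono le_top le_top
  rcases hNmin (N ⊓ G') hJn inf_le_left with hJ | hJ
  · constructor
    · have : ⁅N, G'⁆ ≤ N ⊓ G' := le_inf hNG'le hNG'le2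
      rw [hJ] at this; exact le_bot_iff.mp this
    · have : ⁅N, N⁆ ≤ N ⊓ G' :=
        le_inf (Subgroup.commutator_le_left N N) (hG' ▸ Subgroup.commutator_mono le_top le_top)
      rw [hJ] at this; exact le_bot_iff.mp this
  · have hNG' : N ≤ G' := by rw [← hJ]; exact inf_le_right
    haveI : (⁅N, G'⁆).Normal := Subgroup.commutator_normal N G'
    rcases hNmin ⁅N, G'⁆ this hNG'le with hC | hC
    · exact ⟨hC, le_bot_iff.mp (hC ▸ Subgroup.commutator_mono le_rfl hNG')⟩
    · exfalso
      have hmap : ∀ k : ℕ, N ≤ Subgroup.map G'.subtype ((⊤ : Subgroup ↥G').lowerCentralSeries k) := by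
        intro k
        induction k with
        | zero =>
          have h0 : (⊤ : Subgroup ↥G').lowerCentralSeries 0 = ⊤ := rfl
          rw [h0, ← MonoidHom.range_eq_map, Subgroup.range_subtype]
          exact hNG'
        | succ k ih =>
          have h1 : (⊤ : Subgroup ↥G').lowerCentralSeries (k+1) = ⁅(⊤ : Subgroup ↥G').lowerCentralSeries k, ⊤⁆ := rfl
          rw [h1, Subgroup.map_commutator]
          have h2 : Subgroup.map G'.subtype ⊤ = G' := by
            rw [← MonoidHom.range_eq_map, Subgroup.range_subtype]
          rw [h2]
          calc N = ⁅N, G'⁆ := hC.symm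
          _ ≤ ⁅Subgroup.map G'.subtype ((⊤ : Subgroup ↥G').lowerCentralSeries k), G'⁆ :=
              Subgroup.commutator_mono ih le_rfl
      obtain ⟨k, hk⟩ := _root_.nilpotent_iff_lowerCentralSeries.mp hder
      have := hmap k
      rw [hk, Subgroup.map_bot] at this
      exact hNbot (le_bot_iff.mp this)

lemma scalar [Finite G] (A N : Subgroup G) (hA : SubnormalIn A ⊤)
    (hAs : IsSupersolvable ↥A) (hNn : N.Normal) (hNbot : N ≠ ⊥)
    (hNmin : ∀ K : Subgroup G, K.Normal → K ≤ N → K = ⊥ ∨ K = N)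
    (habel : ∀ x ∈ N, ∀ y ∈ N, Commute x y)
    (hcent : ∀ c ∈ ⁅(⊤ : Subgroup G), (⊤ : Subgroup G)⁆, ∀ x ∈ N, Commute c x) :
    ∀ a ∈ A, ∃ l : ℤ, ∀ n ∈ N, a * n * a⁻¹ = n ^ l := by
  have hNtop : NormalIn N ⊤ := ⟨le_top, fun k _ h hh => hNn.conj_mem h hh k⟩
  have hmin' : ∀ K ≤ N, NormalIn K ⊤ → K = ⊥ ∨ K = N :=
    fun K hK hKn => hNmin K ⟨fun x hx g => hKn.2 g trivial x hx⟩ hK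
  have hline : ∃ v : G, v ≠ 1 ∧ v ∈ N ∧ ∀ a ∈ A, a * v * a⁻¹ ∈ Subgroup.zpowers v := by
    by_cases hNA : N ⊓ A = ⊥
    · obtain ⟨m, c, hc0, hcm, hstep⟩ := hA
      have hvex : ∃ v ∈ N, v ≠ (1 : G) := by
        by_contra h
        push_neg at h
        exact hNbot ((Subgroup.eq_bot_iff_forall N).mpr h)
      obtain ⟨v, hvN, hvne⟩ := hvex
      refine ⟨v, hvne, hvN, fun a ha => ?_⟩
      have hcomm := lemmaW m ⊤ A N c hc0 hcm hstep hNtop hNbot hmin' hNA v hvN a ha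
      have : a * v * a⁻¹ = v := by
        rw [← hcomm.eq]
        group
      rw [this]
      exact Subgroup.mem_zpowers v
    · set W : Subgroup ↥A := (N ⊓ A).subgroupOf A with hW
      have hWn : W.Normal := by
        constructor
        intro x hx g
        rw [Subgroup.mem_subgroupOf] at hx ⊢
        refine ⟨?_, SetLike.coe_mem _⟩
        push_cast
        exact hNn.conj_mem _ hx.1 _
      have hWbot : W ≠ ⊥ := by
        intro h
        apply hNA
        refine (Subgroup.eq_bot_iff_forall _).mpr fun x hx => ?_
        have hxW : (⟨x, hx.2⟩ : ↥A) ∈ W := by rwa [Subgroup.mem_subgroupOf]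
        rw [h, Subgroup.mem_bot] at hxW
        exact congrArg Subtype.val hxW
      obtain ⟨v, hvne, hvW, hzn⟩ := exists_cyclic_normal hAs W hWn hWbot
      rw [Subgroup.mem_subgroupOf] at hvW
      refine ⟨(v : G), fun h => hvne (Subtype.ext h), hvW.1, fun a ha => ?_⟩
      have h1 : (⟨a, ha⟩ : ↥A) * v * (⟨a, ha⟩ : ↥A)⁻¹ ∈ Subgroup.zpowers v :=
        hzn.conj_mem v (Subgroup.mem_zpowers v) _
      obtain ⟨k, hk⟩ := Subgroup.mem_zpowers_iff.mp h1
      refine Subgroup.mem_zpowers_iff.mpr ⟨k, ?_⟩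
      have := congrArg Subtype.val hk
      push_cast at this
      convert this using 1
  intro a ha
  obtain ⟨v, hvne, hvN, hinv⟩ := hline
  obtain ⟨l, hl⟩ := Subgroup.mem_zpowers_iff.mp (hinv a ha)
  set S : Subgroup G :=
    { carrier := {x : G | x ∈ N ∧ a * x * a⁻¹ = x ^ l}
      one_mem' := ⟨one_mem N, by simp⟩
      mul_mem' := by
        rintro x y ⟨hxN, hx⟩ ⟨hyN, hy⟩
        refine ⟨mul_mem hxN hyN, ?_⟩
        have h1 : a * (x * y) * a⁻¹ = (a * x * a⁻¹) * (a * y * a⁻¹) := by group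
        rw [h1, hx, hy, ((habel x hxN y hyN).mul_zpow l)]
      inv_mem' := by
        rintro x ⟨hxN, hx⟩
        refine ⟨inv_mem hxN, ?_⟩
        have h1 : a * x⁻¹ * a⁻¹ = (a * x * a⁻¹)⁻¹ := by group
        rw [h1, hx, ← inv_zpow] } with hS
  have hSN : S ≤ N := fun x hx => hx.1
  have hSnorm : S.Normal := by
    constructor
    rintro x ⟨hxN, hx⟩ g
    refine ⟨hNn.conj_mem _ hxN _, ?_⟩
    have hc : (a⁻¹ * g⁻¹ * a * g) ∈ ⁅(⊤ : Subgroup G), (⊤ : Subgroup G)⁆ := by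
      have := Subgroup.commutator_mem_commutator (Subgroup.mem_top a⁻¹) (Subgroup.mem_top g⁻¹)
        (H₁ := (⊤ : Subgroup G)) (H₂ := (⊤ : Subgroup G))
      simpa [commutatorElement_def, mul_assoc] using this
    have hcx : (a⁻¹ * g⁻¹ * a * g) * x * (a⁻¹ * g⁻¹ * a * g)⁻¹ = x := by
      have h2 := (hcent _ hc x hxN).eq
      rw [h2]
      group
    have key : a * (g * x * g⁻¹) * a⁻¹ =
        g * (a * ((a⁻¹ * g⁻¹ * a * g) * x * (a⁻¹ * g⁻¹ * a * g)⁻¹) * a⁻¹) * g⁻¹ := by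
      group
    rw [key, hcx, hx, conj_zpow]
  have hvS : v ∈ S := ⟨hvN, hl.symm⟩
  have hSbot : S ≠ ⊥ := by
    intro h
    rw [h, Subgroup.mem_bot] at hvS
    exact hvne hvS
  rcases hNmin S hSnorm hSN with h0 | h0
  · exact absurd h0 hSbot
  · exact ⟨l, fun x hx => (h0 ▸ hx : x ∈ S).2⟩

/-- every minimal normal subgroup is cyclic, under the theorem's hypotheses. -/
lemma core [Finite G] (A B N : Subgroup G) (hA : SubnormalIn A ⊤) (hB : SubnormalIn B ⊤)
    (hAs : IsSupersolvable ↥A) (hBs : IsSupersolvable ↥B)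
    (hprod : (A : Set G) * (B : Set G) = Set.univ)
    (hder : Group.IsNilpotent ↥(⁅(⊤ : Subgroup G), (⊤ : Subgroup G)⁆))
    (hNn : N.Normal) (hNbot : N ≠ ⊥)
    (hNmin : ∀ K : Subgroup G, K.Normal → K ≤ N → K = ⊥ ∨ K = N) :
    ∃ x : G, N = Subgroup.zpowers x := by
  obtain ⟨h1, h2⟩ := core_comm N hNn hNbot hNmin hder
  rw [Subgroup.commutator_eq_bot_iff_le_centralizer] at h1 h2
  have habel : ∀ x ∈ N, ∀ y ∈ N, Commute x y := by
    intro x hx y hy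
    exact Subgroup.mem_centralizer_iff.mp (h2 hy) x hx
  have hcent : ∀ c ∈ ⁅(⊤ : Subgroup G), (⊤ : Subgroup G)⁆, ∀ x ∈ N, Commute c x := by
    intro c hc x hx
    exact Subgroup.mem_centralizer_iff.mp (h1 hx) c hc
  have hsA := scalar A N hA hAs hNn hNbot hNmin habel hcent
  have hsB := scalar B N hB hBs hNn hNbot hNmin habel hcent
  have hvex : ∃ x ∈ N, x ≠ (1 : G) := by
    by_contra h
    push_neg at h
    exact hNbot ((Subgroup.eq_bot_iff_forall N).mpr h)
  obtain ⟨x, hxN, hxne⟩ := hvex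
  have hz : (Subgroup.zpowers x).Normal := by
    constructor
    intro y hy g
    have hg : g ∈ (A : Set G) * (B : Set G) := by rw [hprod]; trivial
    obtain ⟨a, ha, b, hb, rfl⟩ := hg
    obtain ⟨la, hla⟩ := hsA a ha
    obtain ⟨lb, hlb⟩ := hsB b hb
    have hyN : y ∈ N := Subgroup.zpowers_le.mpr hxN hy
    have key : (a * b) * y * (a * b)⁻¹ = a * (b * y * b⁻¹) * a⁻¹ := by group
    rw [key, hlb y hyN, hla (y ^ lb) (Subgroup.zpow_mem N hyN lb)]
    exact Subgroup.zpow_mem _ (Subgroup.zpow_mem _ hy lb) la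
  rcases hNmin (Subgroup.zpowers x) hz (Subgroup.zpowers_le.mpr hxN) with h0 | h0
  · exact absurd (Subgroup.zpowers_eq_bot.mp h0) hxne
  · exact ⟨x, h0.symm⟩

lemma supersolvable_of_surjective {G Q : Type*} [Group G] [Group Q] (f : G →* Q)
    (hf : Function.Surjective f) (hs : IsSupersolvable G) : IsSupersolvable Q := by
  obtain ⟨n, c, hc0, hcn, hcnorm, hcstep⟩ := hs
  refine ⟨n, fun i => (c i).map f, by show Subgroup.map f (c 0) = ⊥; rw [hc0, Subgroup.map_bot],
    by show Subgroup.map f (c n) = ⊤; rw [hcn, Subgroup.map_top_of_surjective f hf],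
    fun i => (hcnorm i).map f hf, fun i hi => ?_⟩
  obtain ⟨hle, g, hg⟩ := hcstep i hi
  exact ⟨Subgroup.map_mono hle, f g, by
    show Subgroup.map f (c (i+1)) = Subgroup.map f (c i) ⊔ Subgroup.zpowers (f g)
    rw [hg, Subgroup.map_sup, MonoidHom.map_zpowers]⟩

lemma subnormalIn_top_map {G Q : Type*} [Group G] [Group Q] (f : G →* Q)
    (hf : Function.Surjective f) {A : Subgroup G} (hA : SubnormalIn A ⊤) :
    SubnormalIn (A.map f) ⊤ := by
  obtain ⟨n, c, hc0, hcn, hstep⟩ := hA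
  refine ⟨n, fun i => (c i).map f, by show Subgroup.map f (c 0) = _; rw [hc0],
    by show Subgroup.map f (c n) = ⊤; rw [hcn, Subgroup.map_top_of_surjective f hf],
    fun i hi => ⟨Subgroup.map_mono (hstep i hi).1, ?_⟩⟩
  rintro k ⟨y, hy, rfl⟩ h ⟨x, hx, rfl⟩
  exact ⟨y * x * y⁻¹, (hstep i hi).2 y hy x hx, by simp [mul_assoc]⟩

universe u

lemma main_aux : ∀ (k : ℕ) (G : Type u) [Group G] [Finite G], Nat.card G ≤ k →
    ∀ (A B : Subgroup G), SubnormalIn A ⊤ → SubnormalIn B ⊤ →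
    IsSupersolvable ↥A → IsSupersolvable ↥B →
    (A : Set G) * (B : Set G) = Set.univ →
    Group.IsNilpotent ↥(⁅(⊤ : Subgroup G), (⊤ : Subgroup G)⁆) →
    IsSupersolvable G := by
  intro k
  induction k with
  | zero =>
    intro G _ _ hcard
    exact absurd hcard (by simpa using Nat.card_pos.ne')
  | succ k IH =>
    intro G _ _ hcard A B hA hB hAs hBs hprod hder
    by_cases htriv : (⊤ : Subgroup G) = ⊥
    · exact ⟨0, fun _ => ⊥, rfl, htriv.symm, fun _ => inferInstance, fun i hi => by omega⟩
    obtain ⟨N, hNT, hNmin0⟩ := exists_min_subgroup {K : Subgroup G | K.Normal ∧ K ≠ ⊥}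
      ⟨⊤, inferInstance, htriv⟩
    have hNmin : ∀ K : Subgroup G, K.Normal → K ≤ N → K = ⊥ ∨ K = N := by
      intro K hKn hKle
      by_cases h : K = ⊥
      · exact Or.inl h
      · exact Or.inr (hNmin0 K ⟨hKn, h⟩ hKle)
    obtain ⟨x, hNx⟩ := core A B N hA hB hAs hBs hprod hder hNT.1 hNT.2 hNmin
    haveI := hNT.1
    set π := QuotientGroup.mk' N with hπ
    have hπs : Function.Surjective π := QuotientGroup.mk'_surjective N
    have hker : π.ker = N := QuotientGroup.ker_mk' N
    -- quotient is smaller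
    have hcardq : Nat.card (G ⧸ N) ≤ k := by
      have he : Nat.card G = Nat.card (G ⧸ N) * Nat.card N :=
        Subgroup.card_eq_card_quotient_mul_card_subgroup N
      have h2 : 1 < Nat.card N := (Subgroup.one_lt_card_iff_ne_bot N).mpr hNT.2
      have h3 : 0 < Nat.card (G ⧸ N) := Nat.card_pos
      nlinarith
    -- quotient hypotheses
    have hprodq : ((A.map π : Subgroup (G ⧸ N)) : Set (G ⧸ N)) *
        ((B.map π : Subgroup (G ⧸ N)) : Set (G ⧸ N)) = Set.univ := by
      refine Set.eq_univ_of_forall fun q => ?_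
      obtain ⟨g, rfl⟩ := hπs q
      have hg : g ∈ (A : Set G) * (B : Set G) := by rw [hprod]; trivial
      obtain ⟨a, ha, b, hb, rfl⟩ := hg
      exact ⟨π a, ⟨a, ha, rfl⟩, π b, ⟨b, hb, rfl⟩, (map_mul π a b).symm⟩
    have hderq : Group.IsNilpotent ↥(⁅(⊤ : Subgroup (G ⧸ N)), (⊤ : Subgroup (G ⧸ N))⁆) := by
      have hcomm : ⁅(⊤ : Subgroup (G ⧸ N)), (⊤ : Subgroup (G ⧸ N))⁆ =
          Subgroup.map π ⁅(⊤ : Subgroup G), (⊤ : Subgroup G)⁆ := by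
        rw [Subgroup.map_commutator, Subgroup.map_top_of_surjective π hπs]
      rw [hcomm]
      exact nilpotent_of_surjective _ (MonoidHom.subgroupMap_surjective π _)
    have hQ : IsSupersolvable (G ⧸ N) := by
      refine IH (G ⧸ N) hcardq (A.map π) (B.map π) (subnormalIn_top_map π hπs hA)
        (subnormalIn_top_map π hπs hB) ?_ ?_ hprodq hderq
      · exact supersolvable_of_surjective (π.subgroupMap A)
          (MonoidHom.subgroupMap_surjective π A) hAs
      · exact supersolvable_of_surjective (π.subgroupMap B)
          (MonoidHom.subgroupMap_surjective π B) hBs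
    -- lift the chain
    obtain ⟨n, d, hd0, hdn, hdnorm, hdstep⟩ := hQ
    refine ⟨n + 1, fun i => Nat.casesOn i ⊥ (fun j => (d j).comap π), rfl, ?_, ?_, ?_⟩
    · show (d n).comap π = ⊤
      rw [hdn, Subgroup.comap_top]
    · intro i
      cases i with
      | zero => show (⊥ : Subgroup G).Normal; infer_instance
      | succ j => exact (hdnorm j).comap π
    · intro i hi
      cases i with
      | zero =>
        refine ⟨bot_le, x, ?_⟩
        show (d 0).comap π = ⊥ ⊔ Subgroup.zpowers x
        rw [hd0, bot_sup_eq, ← hNx]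
        exact (MonoidHom.comap_bot π).trans hker
      | succ j =>
        have hj : j < n := by omega
        obtain ⟨hle, gb, hgb⟩ := hdstep j hj
        obtain ⟨g, rfl⟩ := hπs gb
        refine ⟨Subgroup.comap_mono hle, g, ?_⟩
        show (d (j + 1)).comap π = (d j).comap π ⊔ Subgroup.zpowers g
        have hker' : π.ker ≤ (d j).comap π ⊔ Subgroup.zpowers g := by
          refine le_trans ?_ le_sup_left
          intro y hy
          rw [Subgroup.mem_comap, MonoidHom.mem_ker.mp hy]
          exact (d j).one_mem
        have h1 : Subgroup.map π ((d j).comap π ⊔ Subgroup.zpowers g) =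
            d j ⊔ Subgroup.zpowers (π g) := by
          rw [Subgroup.map_sup, MonoidHom.map_zpowers,
            Subgroup.map_comap_eq_self_of_surjective hπs]
        rw [hgb, ← h1, Subgroup.comap_map_eq, sup_eq_left.mpr hker']

end ProdSS

theorem isSupersolvable_of_product_subnormal_supersolvable {G : Type*} [Group G] [Finite G]
    (A B : Subgroup G) (hA : SubnormalIn A ⊤) (hB : SubnormalIn B ⊤)
    (hAs : IsSupersolvable A) (hBs : IsSupersolvable B)
    (hprod : (A : Set G) * (B : Set G) = Set.univ)
    (hder : Group.IsNilpotent ↥(⁅(⊤ : Subgroup G), (⊤ : Subgroup G)⁆)) :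
    IsSupersolvable G := ProdSS.main_aux (Nat.card G) G le_rfl A B hA hB hAs hBs hprod hder
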